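/- Let A be a primitive PC(η)-axial algebra. Then A is equal to the linear span of its set of primitive axes; in particular, A has a spanning set (and, if finite-dimensional, a basis) consisting of primitive axes. -/
import Mathlib


open Submodule

variable {F : Type*} [Field F] {A : Type*} [NonUnitalNonAssocCommRing A]
  [Module F A] [SMulCommClass F A A] [IsScalarTower F A A]

variable (F) in
/-- The `lam`-eigenspace of the adjoint map of `a`. -/
def PCeig (a : A) (lam : F) : Submodule F A where
  carrier := {x : A | a * x = lam • x}
  add_mem' := by
    intro x y hx hy
    simp only [Set.mem_setOf_eq] at hx hy ⊢
    rw [mul_add, hx, hy, smul_add]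
  zero_mem' := by simp
  smul_mem' := by
    intro c x hx
    simp only [Set.mem_setOf_eq] at hx ⊢
    rw [mul_smul_comm, hx, smul_smul, smul_smul, mul_comm]

variable (F) in
/-- The fusion law `PC(η)` for an idempotent (axis) `a`. -/
structure IsPCAxis (η : F) (a : A) : Prop where
  idem : a * a = a
  decomp : PCeig F a 1 ⊔ PCeig F a η ⊔ PCeig F a (1/2 : F) = ⊤
  fus11 : ∀ x ∈ PCeig F a 1, ∀ y ∈ PCeig F a 1, x * y ∈ PCeig F a 1
  fus1e : ∀ x ∈ PCeig F a 1, ∀ y ∈ PCeig F a η, x * y ∈ PCeig F a η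
  fus1h : ∀ x ∈ PCeig F a 1, ∀ y ∈ PCeig F a (1/2 : F), x * y ∈ PCeig F a (1/2 : F)
  fusee : ∀ x ∈ PCeig F a η, ∀ y ∈ PCeig F a η, x * y ∈ PCeig F a 1
  fuseh : ∀ x ∈ PCeig F a η, ∀ y ∈ PCeig F a (1/2 : F), x * y ∈ PCeig F a (1/2 : F)
  fushh : ∀ x ∈ PCeig F a (1/2 : F), ∀ y ∈ PCeig F a (1/2 : F),
    x * y ∈ PCeig F a 1 ⊔ PCeig F a η

variable (F) in
/-- A primitive axis: an axis with `A_1(a) = F·a` (one-dimensional). -/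
def IsPrimPCAxis (η : F) (a : A) : Prop :=
  IsPCAxis F η a ∧ a ≠ 0 ∧ PCeig F a 1 = Submodule.span F {a}

variable (F A) in
/-- A `PC(η)`-axial algebra: generated, as a non-unital algebra, by a (nonempty) set of axes. -/
def IsPCAxialAlgebra (η : F) : Prop :=
  ∃ X : Set A, X.Nonempty ∧ (∀ a ∈ X, IsPCAxis F η a) ∧
    NonUnitalAlgebra.adjoin F X = ⊤

variable (F A) in
/-- A primitive `PC(η)`-axial algebra: generated by a (nonempty) set of primitive axes. -/
def IsPrimPCAxialAlgebra (η : F) : Prop :=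
  ∃ X : Set A, X.Nonempty ∧ (∀ a ∈ X, IsPrimPCAxis F η a) ∧
    NonUnitalAlgebra.adjoin F X = ⊤

/-! ### Auxiliary material: the Miyamoto involution associated to an axis -/

lemma mem_PCeig {a x : A} {lam : F} : x ∈ PCeig F a lam ↔ a * x = lam • x := Iff.rfl

variable (F) in
/-- The Miyamoto involution of the axis `a`: identity on the `1`- and `η`-eigenspaces,
minus identity on the `1/2`-eigenspace. -/
noncomputable def tauA (η : F) (a : A) : A →ₗ[F] A :=
  LinearMap.id - (8 / (2 * η - 1)) •
    ((LinearMap.mulLeft F a).comp (LinearMap.mulLeft F a)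
      - (1 + η) • LinearMap.mulLeft F a + η • LinearMap.id)

lemma tauA_apply (η : F) (a x : A) :
    tauA F η a x = x - (8 / (2 * η - 1)) • (a * (a * x) - (1 + η) • (a * x) + η • x) := by
  simp [tauA, LinearMap.sub_apply, LinearMap.add_apply, LinearMap.smul_apply,
    LinearMap.comp_apply, LinearMap.mulLeft_apply]

lemma two_eta_sub_one_ne {η : F} (h2 : (2 : F) ≠ 0) (hηh : η ≠ 1 / 2) :
    2 * η - 1 ≠ 0 := by
  intro h
  apply hηh
  field_simp
  linear_combination h

lemma tau_fix1 {η : F} {a x : A} (hx : x ∈ PCeig F a 1) : tauA F η a x = x := by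
  have hx' : a * x = x := by rw [mem_PCeig.1 hx, one_smul]
  rw [tauA_apply, hx', hx']
  module

lemma tau_fixe {η : F} {a x : A} (hx : x ∈ PCeig F a η) : tauA F η a x = x := by
  have hx' : a * x = η • x := mem_PCeig.1 hx
  rw [tauA_apply, hx', mul_smul_comm, hx', smul_smul]
  module

lemma tau_negh {η : F} (h2 : (2 : F) ≠ 0) (hηh : η ≠ 1 / 2) {a x : A}
    (hx : x ∈ PCeig F a (1/2 : F)) : tauA F η a x = -x := by
  have h21 : 2 * η - 1 ≠ 0 := two_eta_sub_one_ne h2 hηh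
  have hx' : a * x = (1/2 : F) • x := mem_PCeig.1 hx
  have hco : (8 / (2 * η - 1)) * ((1/2 : F) * (1/2) - (1 + η) * (1/2) + η) = 2 := by
    field_simp
    ring
  rw [tauA_apply, hx', mul_smul_comm, hx', smul_smul, smul_smul, ← sub_smul, ← add_smul,
    smul_smul, hco, two_smul]
  abel

lemma tau_fixsup {η : F} {a z : A} (hz : z ∈ PCeig F a 1 ⊔ PCeig F a η) :
    tauA F η a z = z := by
  rw [Submodule.mem_sup] at hz
  obtain ⟨y, hy, w, hw, rfl⟩ := hz
  rw [map_add, tau_fix1 hy, tau_fixe hw]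

lemma pc_decomp {η : F} {a : A} (ha : IsPCAxis F η a) (x : A) :
    ∃ x1 ∈ PCeig F a 1, ∃ xe ∈ PCeig F a η, ∃ xh ∈ PCeig F a (1/2 : F),
      x = x1 + xe + xh := by
  have hx : x ∈ PCeig F a 1 ⊔ PCeig F a η ⊔ PCeig F a (1/2 : F) := by
    rw [ha.decomp]; exact mem_top
  rw [Submodule.mem_sup] at hx
  obtain ⟨y, hy, z, hz, rfl⟩ := hx
  rw [Submodule.mem_sup] at hy
  obtain ⟨x1, hx1, xe, hxe, rfl⟩ := hy
  exact ⟨x1, hx1, xe, hxe, z, hz, rfl⟩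

lemma tauA_mul {η : F} {a : A} (ha : IsPCAxis F η a) (h2 : (2 : F) ≠ 0)
    (hηh : η ≠ 1 / 2) (x y : A) :
    tauA F η a (x * y) = tauA F η a x * tauA F η a y := by
  obtain ⟨x1, hx1, xe, hxe, xh, hxh, rfl⟩ := pc_decomp ha x
  obtain ⟨y1, hy1, ye, hye, yh, hyh, rfl⟩ := pc_decomp ha y
  have hx' : tauA F η a (x1 + xe + xh) = x1 + xe - xh := by
    rw [map_add, map_add, tau_fix1 hx1, tau_fixe hxe, tau_negh h2 hηh hxh]
    abel
  have hy' : tauA F η a (y1 + ye + yh) = y1 + ye - yh := by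
    rw [map_add, map_add, tau_fix1 hy1, tau_fixe hye, tau_negh h2 hηh hyh]
    abel
  rw [hx', hy']
  have hexp : (x1 + xe + xh) * (y1 + ye + yh)
      = x1 * y1 + x1 * ye + x1 * yh + (xe * y1 + xe * ye + xe * yh)
        + (xh * y1 + xh * ye + xh * yh) := by
    rw [add_mul, add_mul, mul_add, mul_add, mul_add, mul_add, mul_add, mul_add]
  have hexp' : (x1 + xe - xh) * (y1 + ye - yh)
      = (x1 * y1 + x1 * ye - x1 * yh + (xe * y1 + xe * ye - xe * yh))
        - (xh * y1 + xh * ye - xh * yh) := by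
    rw [sub_mul, add_mul, mul_sub, mul_sub, mul_sub, mul_add, mul_add, mul_add]
  have t11 : tauA F η a (x1 * y1) = x1 * y1 := tau_fix1 (ha.fus11 x1 hx1 y1 hy1)
  have t1e : tauA F η a (x1 * ye) = x1 * ye := tau_fixe (ha.fus1e x1 hx1 ye hye)
  have t1h : tauA F η a (x1 * yh) = -(x1 * yh) :=
    tau_negh h2 hηh (ha.fus1h x1 hx1 yh hyh)
  have te1 : tauA F η a (xe * y1) = xe * y1 := by
    have : xe * y1 ∈ PCeig F a η := by
      rw [mul_comm]; exact ha.fus1e y1 hy1 xe hxe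
    exact tau_fixe this
  have tee : tauA F η a (xe * ye) = xe * ye := tau_fix1 (ha.fusee xe hxe ye hye)
  have teh : tauA F η a (xe * yh) = -(xe * yh) :=
    tau_negh h2 hηh (ha.fuseh xe hxe yh hyh)
  have th1 : tauA F η a (xh * y1) = -(xh * y1) := by
    have : xh * y1 ∈ PCeig F a (1/2 : F) := by
      rw [mul_comm]; exact ha.fus1h y1 hy1 xh hxh
    exact tau_negh h2 hηh this
  have the' : tauA F η a (xh * ye) = -(xh * ye) := by
    have : xh * ye ∈ PCeig F a (1/2 : F) := by
      rw [mul_comm]; exact ha.fuseh ye hye xh hxh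
    exact tau_negh h2 hηh this
  have thh : tauA F η a (xh * yh) = xh * yh := tau_fixsup (ha.fushh xh hxh yh hyh)
  rw [hexp, hexp']
  simp only [map_add, t11, t1e, t1h, te1, tee, teh, th1, the', thh]
  abel

lemma tauA_invol {η : F} {a : A} (ha : IsPCAxis F η a) (h2 : (2 : F) ≠ 0)
    (hηh : η ≠ 1 / 2) (x : A) : tauA F η a (tauA F η a x) = x := by
  obtain ⟨x1, hx1, xe, hxe, xh, hxh, rfl⟩ := pc_decomp ha x
  have hx' : tauA F η a (x1 + xe + xh) = x1 + xe - xh := by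
    rw [map_add, map_add, tau_fix1 hx1, tau_fixe hxe, tau_negh h2 hηh hxh]
    abel
  rw [hx', map_sub, map_add, tau_fix1 hx1, tau_fixe hxe, tau_negh h2 hηh hxh]
  abel

lemma tauA_surj {η : F} {a : A} (ha : IsPCAxis F η a) (h2 : (2 : F) ≠ 0)
    (hηh : η ≠ 1 / 2) : Function.Surjective (tauA F η a) :=
  fun y => ⟨tauA F η a y, tauA_invol ha h2 hηh y⟩

lemma PCeig_tau {η : F} {a : A} (ha : IsPCAxis F η a) (h2 : (2 : F) ≠ 0)
    (hηh : η ≠ 1 / 2) (b : A) (lam : F) :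
    PCeig F (tauA F η a b) lam = Submodule.map (tauA F η a) (PCeig F b lam) := by
  ext x
  constructor
  · intro hx
    have h := congrArg (tauA F η a) (mem_PCeig.1 hx)
    rw [tauA_mul ha h2 hηh, tauA_invol ha h2 hηh, map_smul] at h
    exact ⟨tauA F η a x, mem_PCeig.2 h, tauA_invol ha h2 hηh x⟩
  · rintro ⟨y, hy, rfl⟩
    rw [mem_PCeig, ← tauA_mul ha h2 hηh, mem_PCeig.1 hy, map_smul]

lemma tau_prim {η : F} {a b : A} (ha : IsPCAxis F η a) (h2 : (2 : F) ≠ 0)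
    (hηh : η ≠ 1 / 2) (hb : IsPrimPCAxis F η b) :
    IsPrimPCAxis F η (tauA F η a b) := by
  have hmul := tauA_mul ha h2 hηh
  have hpt := PCeig_tau ha h2 hηh b
  have hrange : LinearMap.range (tauA F η a) = ⊤ :=
    LinearMap.range_eq_top.2 (tauA_surj ha h2 hηh)
  refine ⟨⟨?_, ?_, ?_, ?_, ?_, ?_, ?_, ?_⟩, ?_, ?_⟩
  · rw [← hmul, hb.1.idem]
  · rw [hpt, hpt, hpt, ← Submodule.map_sup, ← Submodule.map_sup, hb.1.decomp,
      Submodule.map_top, hrange]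
  · intro x hx y hy
    rw [hpt] at hx hy ⊢
    obtain ⟨x', hx', rfl⟩ := hx
    obtain ⟨y', hy', rfl⟩ := hy
    exact ⟨x' * y', hb.1.fus11 x' hx' y' hy', hmul x' y'⟩
  · intro x hx y hy
    rw [hpt] at hx hy ⊢
    obtain ⟨x', hx', rfl⟩ := hx
    obtain ⟨y', hy', rfl⟩ := hy
    exact ⟨x' * y', hb.1.fus1e x' hx' y' hy', hmul x' y'⟩
  · intro x hx y hy
    rw [hpt] at hx hy ⊢
    obtain ⟨x', hx', rfl⟩ := hx
    obtain ⟨y', hy', rfl⟩ := hy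
    exact ⟨x' * y', hb.1.fus1h x' hx' y' hy', hmul x' y'⟩
  · intro x hx y hy
    rw [hpt] at hx hy ⊢
    obtain ⟨x', hx', rfl⟩ := hx
    obtain ⟨y', hy', rfl⟩ := hy
    exact ⟨x' * y', hb.1.fusee x' hx' y' hy', hmul x' y'⟩
  · intro x hx y hy
    rw [hpt] at hx hy ⊢
    obtain ⟨x', hx', rfl⟩ := hx
    obtain ⟨y', hy', rfl⟩ := hy
    exact ⟨x' * y', hb.1.fuseh x' hx' y' hy', hmul x' y'⟩
  · intro x hx y hy
    rw [hpt] at hx hy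
    rw [hpt, hpt, ← Submodule.map_sup]
    obtain ⟨x', hx', rfl⟩ := hx
    obtain ⟨y', hy', rfl⟩ := hy
    exact ⟨x' * y', hb.1.fushh x' hx' y' hy', hmul x' y'⟩
  · intro h
    apply hb.2.1
    have hbb : b = tauA F η a (tauA F η a b) := (tauA_invol ha h2 hηh b).symm
    rw [h, map_zero] at hbb
    exact hbb
  · rw [hpt, hb.2.2, Submodule.map_span, Set.image_singleton]

/-- a primitive `PC(η)`-axial algebra is the linear span of its primitive axes. -/
theorem stmt6 (η : F) (h2 : (2 : F) ≠ 0) (hη1 : η ≠ 1) (hηh : η ≠ 1 / 2)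
    (hA : IsPrimPCAxialAlgebra F A η) :
    Submodule.span F {a : A | IsPrimPCAxis F η a} = ⊤ := by
  obtain ⟨X, hXne, hX, hXtop⟩ := hA
  set S : Set A := {a : A | IsPrimPCAxis F η a} with hS
  have key : ∀ a ∈ S, ∀ b ∈ S, a * b ∈ span F S := by
    intro a haS b hbS
    have ha : IsPCAxis F η a := haS.1
    obtain ⟨b1, hb1, be, hbe, bh, hbh, hbdec⟩ := pc_decomp ha b
    have hτb : tauA F η a b = b1 + be - bh := by
      rw [hbdec, map_add, map_add, tau_fix1 hb1, tau_fixe hbe, tau_negh h2 hηh hbh]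
      abel
    have hτbS : tauA F η a b ∈ S := tau_prim ha h2 hηh hbS
    have hbM : b ∈ span F S := subset_span hbS
    have hτM : tauA F η a b ∈ span F S := subset_span hτbS
    have hb1M : b1 ∈ span F S := by
      have h1 : b1 ∈ span F ({a} : Set A) := haS.2.2 ▸ hb1
      exact span_mono (Set.singleton_subset_iff.2 haS) h1
    have hbhM : bh ∈ span F S := by
      have hsum : b - tauA F η a b = bh + bh := by rw [hτb, hbdec]; abel
      have hbh' : bh = (2 : F)⁻¹ • (b - tauA F η a b) := by
        rw [hsum, ← two_smul F, smul_smul, inv_mul_cancel₀ h2, one_smul]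
      rw [hbh']
      exact smul_mem _ _ (sub_mem hbM hτM)
    have hbeM : be ∈ span F S := by
      have hb' : be = b - b1 - bh := by rw [hbdec]; abel
      rw [hb']
      exact sub_mem (sub_mem hbM hb1M) hbhM
    have hab : a * b = b1 + η • be + (1/2 : F) • bh := by
      rw [hbdec, mul_add, mul_add, mem_PCeig.1 hb1, mem_PCeig.1 hbe, mem_PCeig.1 hbh,
        one_smul]
    rw [hab]
    exact add_mem (add_mem hb1M (smul_mem _ _ hbeM)) (smul_mem _ _ hbhM)
  have hmul1 : ∀ a ∈ S, ∀ y ∈ span F S, a * y ∈ span F S := by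
    intro a haS y hy
    induction hy using Submodule.span_induction with
    | mem z hz => exact key a haS z hz
    | zero => rw [mul_zero]; exact zero_mem _
    | add u v _ _ ihu ihv => rw [mul_add]; exact add_mem ihu ihv
    | smul c u _ ihu => rw [mul_smul_comm]; exact smul_mem _ _ ihu
  have hmul : ∀ x ∈ span F S, ∀ y ∈ span F S, x * y ∈ span F S := by
    intro x hx y hy
    induction hx using Submodule.span_induction with
    | mem z hz => exact hmul1 z hz y hy
    | zero => rw [zero_mul]; exact zero_mem _
    | add u v _ _ ihu ihv => rw [add_mul]; exact add_mem ihu ihv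
    | smul c u _ ihu => rw [smul_mul_assoc]; exact smul_mem _ _ ihu
  have hle : NonUnitalAlgebra.adjoin F X ≤
      (span F S).toNonUnitalSubalgebra (fun x y hx hy => hmul x hx y hy) :=
    NonUnitalAlgebra.adjoin_le (fun x hx => subset_span (hX x hx))
  rw [hXtop] at hle
  rw [eq_top_iff]
  exact fun x _ => hle (show x ∈ (⊤ : NonUnitalSubalgebra F A) from trivial)
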